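/- arXiv:1610.05127 — 8 statements merged into one kernel-verified Lean document; each statement's English description precedes it below -/
import Mathlib

section
/- Let X be a nonempty finite set of vectors in {0,1}^n, let ĉ ∈ ℝ^n with ĉ_i ≥ 0, and let w : [0,1] → ℝ_{≥0} be integrable with ∫₀¹ (1+λ)w(λ) dλ > 0. Define val(x) = ∫₀¹ w(λ) · (1+λ) ĉᵗx dλ, which equals ∫₀¹ w(λ) (max over c in the box ∏ᵢ[(1−λ)ĉᵢ,(1+λ)ĉᵢ] of cᵗx) dλ. Then any x̂ ∈ X minimizing ĉᵗx over X also minimizes val(x) over X. -/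
open MeasureTheory Finset

theorem stmt0 {n : ℕ} (X : Finset (Fin n → ℝ)) (hX : X.Nonempty)
    (hbin : ∀ x ∈ X, ∀ i, x i = 0 ∨ x i = 1)
    (chat : Fin n → ℝ) (hc : ∀ i, 0 ≤ chat i)
    (w : ℝ → ℝ) (hw : IntervalIntegrable w volume 0 1)
    (hwnn : ∀ t ∈ Set.Icc (0:ℝ) 1, 0 ≤ w t)
    (hpos : 0 < ∫ t in (0:ℝ)..1, (1 + t) * w t)
    (val : (Fin n → ℝ) → ℝ)
    (hval : ∀ x, val x = ∫ t in (0:ℝ)..1, w t * ((1 + t) * ∑ i, chat i * x i))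
    (xhat : Fin n → ℝ) (hxhat : xhat ∈ X)
    (hmin : ∀ x ∈ X, ∑ i, chat i * xhat i ≤ ∑ i, chat i * x i) :
    ∀ x ∈ X, val xhat ≤ val x := by
  intro x hx
  have key : ∀ y : Fin n → ℝ,
      val y = (∫ t in (0:ℝ)..1, (1 + t) * w t) * ∑ i, chat i * y i := by
    intro y
    rw [hval]
    rw [← intervalIntegral.integral_mul_const]
    congr 1; funext t; ring
  rw [key, key]
  exact mul_le_mul_of_nonneg_left (hmin x hx) hpos.le
end

section
/- Let X ⊆ ℝ^n be nonempty and finite, ĉ ∈ ℝ^n, C an n×m matrix, Λ ⊆ ℝ_{≥0} an interval, and w : Λ → ℝ_{≥0} integrable with W := ∫_Λ w(λ) dλ > 0 and L := ∫_Λ λ w(λ) dλ finite. Define val(x) = ∫_Λ w(λ)(ĉᵗx + λ‖Cᵗx‖₂) dλ. Then x* minimizes val over X if and only if x* minimizes ĉᵗx + λ'‖Cᵗx‖₂ over X, where λ' = L/W. -/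
open MeasureTheory

/-- The Euclidean norm of `Cᵀ x`. -/
noncomputable def ellNorm {n m : ℕ} (C : Matrix (Fin n) (Fin m) ℝ) (x : Fin n → ℝ) : ℝ :=
  ‖(EuclideanSpace.equiv (Fin m) ℝ).symm (C.transpose.mulVec x)‖

theorem stmt3 {n m : ℕ} (X : Finset (Fin n → ℝ)) (hX : X.Nonempty)
    (chat : Fin n → ℝ) (C : Matrix (Fin n) (Fin m) ℝ)
    (s : Set ℝ) (hs : s ⊆ Set.Ici 0) (hsi : s.OrdConnected) (hms : MeasurableSet s)
    (w : ℝ → ℝ) (hwnn : ∀ t ∈ s, 0 ≤ w t)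
    (hw : IntegrableOn w s) (hlw : IntegrableOn (fun t => t * w t) s)
    (W L : ℝ) (hW : W = ∫ t in s, w t) (hL : L = ∫ t in s, t * w t)
    (hWpos : 0 < W)
    (val : (Fin n → ℝ) → ℝ)
    (hval : ∀ x, val x = ∫ t in s, w t * ((∑ i, chat i * x i) + t * ellNorm C x))
    (xstar : Fin n → ℝ) (hxs : xstar ∈ X) :
    (∀ x ∈ X, val xstar ≤ val x) ↔
    (∀ x ∈ X, (∑ i, chat i * xstar i) + (L / W) * ellNorm C xstar ≤
              (∑ i, chat i * x i) + (L / W) * ellNorm C x) := by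
  have key : ∀ x, val x = W * ((∑ i, chat i * x i) + (L / W) * ellNorm C x) := by
    intro x
    set a := ∑ i, chat i * x i
    set b := ellNorm C x
    have h1 : val x = ∫ t in s, (a * w t + b * (t * w t)) := by
      rw [hval x]; congr 1; funext t; ring
    rw [h1, integral_add (hw.const_mul a) (hlw.const_mul b),
      integral_const_mul, integral_const_mul, ← hW, ← hL]
    field_simp
  constructor
  · intro h x hx
    have := h x hx
    rw [key, key] at this
    exact le_of_mul_le_mul_left this hWpos
  · intro h x hx
    rw [key, key]
    exact mul_le_mul_of_nonneg_left (h x hx) hWpos.le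
end

section
/- In the min-max regret selection problem with uncertainty U(λ) = ∏_i [(1−λ)ĉ_i,(1+λ)ĉ_i] for fixed λ ∈ [0,1] and ĉ ≥ 0, a solution x̂ selecting the p items of smallest nominal cost ĉ minimizes the regret Reg(x) = max_{c∈U(λ)}(cᵗx − min_{y∈X} cᵗy) over all feasible selections x. -/
open Finset in
theorem stmt7_key {n : ℕ} (chat : Fin n → ℝ)
    (l : ℝ) (hl0 : 0 ≤ l) (hl1 : l ≤ 1)
    (A B : Finset (Fin n)) (hAB : A.card = B.card)
    (hsm : ∀ i ∈ A, ∀ j, j ∉ A → chat i ≤ chat j)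
    (T : Finset (Fin n)) (hT : T.card = A.card) :
    ∃ T' : Finset (Fin n), T'.card = B.card ∧
      (1+l) * ∑ i ∈ A \ T, chat i - (1-l) * ∑ i ∈ T \ A, chat i ≤
      (1+l) * ∑ i ∈ B \ T', chat i - (1-l) * ∑ i ∈ T' \ B, chat i := by
  have hcard : (A \ B).card = (B \ A).card := by
    have h1 := Finset.card_sdiff_add_card_inter A B
    have h2 := Finset.card_sdiff_add_card_inter B A
    rw [Finset.inter_comm] at h2
    omega
  set e := Finset.equivOfCardEq hcard with he
  set F : Fin n → Fin n := fun i => if h : i ∈ A \ B then (e ⟨i, h⟩ : Fin n) else i with hF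
  set G : Fin n → Fin n := fun j => if h : j ∈ B \ A then (e.symm ⟨j, h⟩ : Fin n) else j with hG
  have hFmem : ∀ i ∈ A \ B, F i ∈ B \ A := by
    intro i hi
    simp only [hF, dif_pos hi]
    exact (e ⟨i, hi⟩).2
  have hGmem : ∀ j ∈ B \ A, G j ∈ A \ B := by
    intro j hj
    simp only [hG, dif_pos hj]
    exact (e.symm ⟨j, hj⟩).2
  have hFinj : Set.InjOn F ↑(A \ B) := by
    intro i hi i' hi' hii'
    have hi1 : i ∈ A \ B := Finset.mem_coe.mp hi
    have hi2 : i' ∈ A \ B := Finset.mem_coe.mp hi'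
    simp only [hF, dif_pos hi1, dif_pos hi2] at hii'
    have : e ⟨i, hi1⟩ = e ⟨i', hi2⟩ := Subtype.ext hii'
    exact congrArg Subtype.val (e.injective this)
  have hGinj : Set.InjOn G ↑(B \ A) := by
    intro i hi i' hi' hii'
    have hi1 : i ∈ B \ A := Finset.mem_coe.mp hi
    have hi2 : i' ∈ B \ A := Finset.mem_coe.mp hi'
    simp only [hG, dif_pos hi1, dif_pos hi2] at hii'
    have : e.symm ⟨i, hi1⟩ = e.symm ⟨i', hi2⟩ := Subtype.ext hii'
    exact congrArg Subtype.val (e.symm.injective this)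
  set D := A \ T with hD
  set E := T \ A with hE
  have hDA : D ⊆ A := Finset.sdiff_subset
  have hEA : ∀ j ∈ E, j ∉ A := fun j hj => (Finset.mem_sdiff.mp hj).2
  have hDEcard : E.card = D.card := by
    have h1 := Finset.card_sdiff_add_card_inter A T
    have h2 := Finset.card_sdiff_add_card_inter T A
    rw [Finset.inter_comm] at h2
    rw [hD, hE]
    omega
  set D' := (D ∩ B) ∪ (D \ B).image F with hD'
  set E' := (E \ B) ∪ (E ∩ B).image G with hE'
  have hDBsub : D \ B ⊆ A \ B := by
    intro i hi
    rw [Finset.mem_sdiff] at hi ⊢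
    exact ⟨hDA hi.1, hi.2⟩
  have hEBsub : E ∩ B ⊆ B \ A := by
    intro j hj
    rw [Finset.mem_inter] at hj
    rw [Finset.mem_sdiff]
    exact ⟨hj.2, hEA j hj.1⟩
  have hFim : ∀ i ∈ (D \ B).image F, i ∈ B \ A := by
    intro i hi
    obtain ⟨j, hj, rfl⟩ := Finset.mem_image.mp hi
    exact hFmem j (hDBsub hj)
  have hGim : ∀ i ∈ (E ∩ B).image G, i ∈ A \ B := by
    intro i hi
    obtain ⟨j, hj, rfl⟩ := Finset.mem_image.mp hi
    exact hGmem j (hEBsub hj)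
  have hD'B : D' ⊆ B := by
    intro i hi
    rcases Finset.mem_union.mp hi with h | h
    · exact (Finset.mem_inter.mp h).2
    · exact (Finset.mem_sdiff.mp (hFim i h)).1
  have hE'B : ∀ j ∈ E', j ∉ B := by
    intro j hj
    rcases Finset.mem_union.mp hj with h | h
    · exact (Finset.mem_sdiff.mp h).2
    · exact (Finset.mem_sdiff.mp (hGim j h)).2
  have hD'card : D'.card = D.card := by
    rw [hD', Finset.card_union_of_disjoint, Finset.card_image_of_injOn (hFinj.mono (by exact_mod_cast hDBsub)),
      Finset.card_inter_add_card_sdiff]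
    · exact Finset.disjoint_left.mpr (fun i hi hi' => 
        (Finset.mem_sdiff.mp (hFim i hi')).2 (hDA (Finset.mem_inter.mp hi).1))
  have hE'card : E'.card = E.card := by
    rw [hE', Finset.card_union_of_disjoint, Finset.card_image_of_injOn (hGinj.mono (by exact_mod_cast hEBsub)),
      Finset.card_sdiff_add_card_inter]
    · exact Finset.disjoint_left.mpr (fun i hi hi' => 
        (hEA i (Finset.mem_sdiff.mp hi).1) (Finset.mem_sdiff.mp (hGim i hi')).1)
  set T' := (B \ D') ∪ E' with hT'
  refine ⟨T', ?_, ?_⟩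
  · rw [hT', Finset.card_union_of_disjoint, Finset.card_sdiff_of_subset hD'B, hD'card, hE'card, hDEcard]
    · have : D.card ≤ B.card := le_trans (Finset.card_le_card hDA) (le_of_eq hAB)
      omega
    · exact Finset.disjoint_left.mpr (fun i hi hi' => hE'B i hi' (Finset.mem_sdiff.mp hi).1)
  · have hBT' : B \ T' = D' := by
      ext i
      simp only [hT', Finset.mem_sdiff, Finset.mem_union, not_or, not_and, not_not]
      constructor
      · rintro ⟨hiB, h1, h2⟩
        exact h1 hiB
      · intro hiD'
        exact ⟨hD'B hiD', fun _ => hiD', fun h => absurd (hD'B hiD') (hE'B i h) ⟩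
    have hT'B : T' \ B = E' := by
      ext i
      simp only [hT', Finset.mem_sdiff, Finset.mem_union]
      constructor
      · rintro ⟨h1 | h2, hiB⟩
        · exact absurd h1.1 hiB
        · exact h2
      · intro hiE'
        exact ⟨Or.inr hiE', hE'B i hiE'⟩
    rw [hBT', hT'B]
    have hsumD : ∑ i ∈ D, chat i ≤ ∑ i ∈ D', chat i := by
      rw [hD', Finset.sum_union, Finset.sum_image (fun a ha b hb hab => hFinj (by exact_mod_cast hDBsub ha) (by exact_mod_cast hDBsub hb) hab)]
      · have : ∑ i ∈ D, chat i = ∑ i ∈ D ∩ B, chat i + ∑ i ∈ D \ B, chat i := by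
          rw [Finset.sum_inter_add_sum_sdiff]
        rw [this]
        gcongr with i hi
        have hiAB := hDBsub hi
        have hFi := hFmem i hiAB
        exact hsm i (Finset.mem_sdiff.mp hiAB).1 (F i) (Finset.mem_sdiff.mp hFi).2
      · exact Finset.disjoint_left.mpr (fun i hi hi' => 
          (Finset.mem_sdiff.mp (hFim i hi')).2 (hDA (Finset.mem_inter.mp hi).1))
    have hsumE : ∑ i ∈ E', chat i ≤ ∑ i ∈ E, chat i := by
      rw [hE', Finset.sum_union, Finset.sum_image (fun a ha b hb hab => hGinj (by exact_mod_cast hEBsub ha) (by exact_mod_cast hEBsub hb) hab)]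
      · have : ∑ i ∈ E, chat i = ∑ i ∈ E ∩ B, chat i + ∑ i ∈ E \ B, chat i := by
          rw [Finset.sum_inter_add_sum_sdiff]
        rw [this]
        rw [add_comm]
        gcongr with j hj
        have hjBA := hEBsub hj
        have hGj := hGmem j hjBA
        exact hsm (G j) (Finset.mem_sdiff.mp hGj).1 j (Finset.mem_sdiff.mp hjBA).2
      · exact Finset.disjoint_left.mpr (fun i hi hi' => 
          (hEA i (Finset.mem_sdiff.mp hi).1) (Finset.mem_sdiff.mp (hGim i hi')).1)
    have h1 : (0:ℝ) ≤ 1 + l := by linarith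
    have h2 : (0:ℝ) ≤ 1 - l := by linarith
    have := mul_le_mul_of_nonneg_left hsumD h1
    have := mul_le_mul_of_nonneg_left hsumE h2
    linarith


lemma stmt7_sum_ind {n : ℕ} (c : Fin n → ℝ) (S : Finset (Fin n)) :
    ∑ i, c i * (if i ∈ S then (1:ℝ) else 0) = ∑ i ∈ S, c i := by
  simp [mul_ite, Finset.sum_ite_mem]

lemma stmt7_card_ind {n : ℕ} (S : Finset (Fin n)) :
    ∑ i, (if i ∈ S then (1:ℝ) else 0) = (S.card : ℝ) := by
  simp [Finset.sum_ite_mem]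

lemma stmt7_dsum {n : ℕ} (chat : Fin n → ℝ) (l : ℝ) (S T : Finset (Fin n)) :
    ∑ i ∈ T, (if i ∈ S then (1+l) else (1-l)) * chat i
      = (1+l) * ∑ i ∈ T ∩ S, chat i + (1-l) * ∑ i ∈ T \ S, chat i := by
  rw [← Finset.sum_filter_add_sum_filter_not T (· ∈ S)]
  rw [Finset.filter_mem_eq_inter, ← Finset.sdiff_eq_filter]
  rw [Finset.mul_sum, Finset.mul_sum]
  congr 1
  · exact Finset.sum_congr rfl (fun i hi => by rw [if_pos (Finset.mem_inter.mp hi).2])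
  · exact Finset.sum_congr rfl (fun i hi => by rw [if_neg (Finset.mem_sdiff.mp hi).2])

lemma stmt7_gval {n : ℕ} (chat : Fin n → ℝ) (l : ℝ) (S T : Finset (Fin n)) :
    (∑ i, ((if i ∈ S then (1+l) else (1-l)) * chat i) * (if i ∈ S then (1:ℝ) else 0))
      - (∑ i, ((if i ∈ S then (1+l) else (1-l)) * chat i) * (if i ∈ T then (1:ℝ) else 0))
      = (1+l) * ∑ i ∈ S \ T, chat i - (1-l) * ∑ i ∈ T \ S, chat i := by
  rw [stmt7_sum_ind, stmt7_sum_ind, stmt7_dsum, stmt7_dsum]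
  rw [Finset.inter_self, Finset.sdiff_self, Finset.sum_empty]
  have h1 : ∑ i ∈ S, chat i = ∑ i ∈ S ∩ T, chat i + ∑ i ∈ S \ T, chat i :=
    (Finset.sum_inter_add_sum_sdiff S T chat).symm
  have h2 : ∑ i ∈ T ∩ S, chat i = ∑ i ∈ S ∩ T, chat i := by rw [Finset.inter_comm]
  rw [h1, h2]
  ring


theorem stmt7 {n : ℕ} (p : ℕ) (chat : Fin n → ℝ) (hc : ∀ i, 0 ≤ chat i)
    (l : ℝ) (hl : l ∈ Set.Icc (0:ℝ) 1)
    (feas : (Fin n → ℝ) → Prop)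
    (hfeas : ∀ x, feas x ↔ ((∀ i, x i = 0 ∨ x i = 1) ∧ ∑ i, x i = (p : ℝ)))
    (opt : (Fin n → ℝ) → ℝ)
    (hopt : ∀ c, opt c = sInf {v : ℝ | ∃ y, feas y ∧ v = ∑ i, c i * y i})
    (Reg : (Fin n → ℝ) → ℝ)
    (hReg : ∀ x, Reg x = sSup {v : ℝ | ∃ c : Fin n → ℝ,
        (∀ i, (1 - l) * chat i ≤ c i ∧ c i ≤ (1 + l) * chat i) ∧
        v = (∑ i, c i * x i) - opt c})
    (xhat : Fin n → ℝ) (hxhatf : feas xhat)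
    (hsmall : ∀ i j, xhat i = 1 → xhat j = 0 → chat i ≤ chat j) :
    ∀ x, feas x → Reg xhat ≤ Reg x := by
  obtain ⟨hl0, hl1⟩ := hl
  set ind : Finset (Fin n) → (Fin n → ℝ) := fun S i => if i ∈ S then (1:ℝ) else 0 with hind
  set dvec : Finset (Fin n) → (Fin n → ℝ) :=
    fun S i => (if i ∈ S then (1+l) else (1-l)) * chat i with hdvec
  -- feasibility of indicators
  have hfeasInd : ∀ S : Finset (Fin n), S.card = p → feas (ind S) := by
    intro S hS
    rw [hfeas]
    refine ⟨fun i => ?_, ?_⟩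
    · by_cases h : i ∈ S <;> simp [hind, h]
    · simp only [hind]
      rw [stmt7_card_ind, hS]
  -- extraction
  have hextract : ∀ x, feas x → ∃ S : Finset (Fin n), S.card = p ∧ x = ind S := by
    intro x hx
    rw [hfeas] at hx
    obtain ⟨h01, hsum⟩ := hx
    refine ⟨Finset.univ.filter (fun i => x i = 1), ?_, ?_⟩
    · have hxind : x = ind (Finset.univ.filter (fun i => x i = 1)) := by
        funext i
        rcases h01 i with h | h <;>
          simp [hind, h, Finset.mem_filter]
      rw [hxind] at hsum
      simp only [hind] at hsum
      rw [stmt7_card_ind] at hsum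
      exact_mod_cast hsum
    · funext i
      rcases h01 i with h | h <;>
        simp [hind, h, Finset.mem_filter]
  -- dvec is in the box
  have hbox : ∀ S : Finset (Fin n), ∀ i,
      (1 - l) * chat i ≤ dvec S i ∧ dvec S i ≤ (1 + l) * chat i := by
    intro S i
    have h2 : (1 - l) * chat i ≤ (1 + l) * chat i := by nlinarith [hc i]
    by_cases h : i ∈ S <;> simp [hdvec, h, h2, le_refl]
  -- opt facts
  have hoptfin : ∀ c : Fin n → ℝ,
      {v : ℝ | ∃ y, feas y ∧ v = ∑ i, c i * y i}.Finite := by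
    intro c
    apply Set.Finite.subset (Set.finite_range (fun S : Finset (Fin n) => ∑ i ∈ S, c i))
    rintro v ⟨y, hy, rfl⟩
    obtain ⟨S, _, rfl⟩ := hextract y hy
    refine ⟨S, ?_⟩
    simp only [hind]
    exact (stmt7_sum_ind c S).symm
  have hoptne : ∀ c : Fin n → ℝ,
      {v : ℝ | ∃ y, feas y ∧ v = ∑ i, c i * y i}.Nonempty :=
    fun c => ⟨_, xhat, hxhatf, rfl⟩
  have hoptmem : ∀ c : Fin n → ℝ, ∃ y, feas y ∧ opt c = ∑ i, c i * y i := by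
    intro c
    rw [hopt]
    exact (hoptne c).csInf_mem (hoptfin c)
  have hoptle : ∀ c : Fin n → ℝ, ∀ y, feas y → opt c ≤ ∑ i, c i * y i := by
    intro c y hy
    rw [hopt]
    exact csInf_le (hoptfin c).bddBelow ⟨y, hy, rfl⟩
  have hoptnn : ∀ c : Fin n → ℝ, (∀ i, 0 ≤ c i) → 0 ≤ opt c := by
    intro c hcn
    rw [hopt]
    apply le_csInf (hoptne c)
    rintro v ⟨y, hy, rfl⟩
    obtain ⟨S, _, rfl⟩ := hextract y hy
    simp only [hind]
    rw [stmt7_sum_ind]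
    exact Finset.sum_nonneg (fun i _ => hcn i)
  -- box implies nonneg
  have hboxnn : ∀ c : Fin n → ℝ,
      (∀ i, (1 - l) * chat i ≤ c i ∧ c i ≤ (1 + l) * chat i) → ∀ i, 0 ≤ c i := by
    intro c hcb i
    have := (hcb i).1
    nlinarith [hc i]
  -- bddAbove of regret sets
  have hbdd : ∀ x, feas x → BddAbove {v : ℝ | ∃ c : Fin n → ℝ,
      (∀ i, (1 - l) * chat i ≤ c i ∧ c i ≤ (1 + l) * chat i) ∧
      v = (∑ i, c i * x i) - opt c} := by
    intro x hx
    refine ⟨∑ i, (1 + l) * chat i, ?_⟩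
    rintro v ⟨c, hcb, rfl⟩
    have h1 : ∑ i, c i * x i ≤ ∑ i, (1 + l) * chat i := by
      apply Finset.sum_le_sum
      intro i _
      rcases ((hfeas x).mp hx).1 i with h | h <;> rw [h]
      · rw [mul_zero]; nlinarith [hc i]
      · rw [mul_one]; exact (hcb i).2
    have h2 : 0 ≤ opt c := hoptnn c (hboxnn c hcb)
    linarith
  -- extract A and B
  intro x hx
  obtain ⟨A, hAcard, hxhatA⟩ := hextract xhat hxhatf
  obtain ⟨B, hBcard, hxB⟩ := hextract x hx
  have hsm : ∀ i ∈ A, ∀ j, j ∉ A → chat i ≤ chat j := by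
    intro i hi j hj
    apply hsmall
    · rw [hxhatA]; simp [hind, hi]
    · rw [hxhatA]; simp [hind, hj]
  rw [hReg xhat, hReg x]
  have hne : {v : ℝ | ∃ c : Fin n → ℝ,
      (∀ i, (1 - l) * chat i ≤ c i ∧ c i ≤ (1 + l) * chat i) ∧
      v = (∑ i, c i * xhat i) - opt c}.Nonempty := by
    refine ⟨(∑ i, chat i * xhat i) - opt chat, chat, fun i => ⟨?_, ?_⟩, rfl⟩
    · nlinarith [hc i]
    · nlinarith [hc i]
  apply csSup_le hne
  rintro b ⟨c, hcb, rfl⟩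
  -- optimal response to c
  obtain ⟨y, hy, heq⟩ := hoptmem c
  obtain ⟨Ty, hTycard, hyTy⟩ := hextract y hy
  -- Step 1: pointwise bound with dvec A
  have step1 : (∑ i, c i * xhat i) - opt c ≤
      (∑ i, dvec A i * ind A i) - (∑ i, dvec A i * ind Ty i) := by
    rw [heq, hyTy, hxhatA]
    rw [← Finset.sum_sub_distrib, ← Finset.sum_sub_distrib]
    apply Finset.sum_le_sum
    intro i _
    by_cases hiA : i ∈ A <;> by_cases hiT : i ∈ Ty <;>
      simp [hind, hdvec, hiA, hiT] <;>
      linarith [(hcb i).1, (hcb i).2]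
  -- Step 2: closed form
  have step2 : (∑ i, dvec A i * ind A i) - (∑ i, dvec A i * ind Ty i) =
      (1+l) * ∑ i ∈ A \ Ty, chat i - (1-l) * ∑ i ∈ Ty \ A, chat i := by
    simp only [hind, hdvec]
    exact stmt7_gval chat l A Ty
  -- Step 3: key combinatorial lemma
  obtain ⟨T', hT'card, hkey⟩ := stmt7_key chat l hl0 hl1 A B
    (hAcard.trans hBcard.symm) hsm Ty (hTycard.trans hAcard.symm)
  -- Step 4: back to regret of x
  have step4 : (1+l) * ∑ i ∈ B \ T', chat i - (1-l) * ∑ i ∈ T' \ B, chat i ≤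
      (∑ i, dvec B i * x i) - opt (dvec B) := by
    have h1 : opt (dvec B) ≤ ∑ i, dvec B i * ind T' i :=
      hoptle (dvec B) (ind T') (hfeasInd T' (hT'card.trans hBcard))
    have h2 : (∑ i, dvec B i * ind B i) - (∑ i, dvec B i * ind T' i) =
        (1+l) * ∑ i ∈ B \ T', chat i - (1-l) * ∑ i ∈ T' \ B, chat i := by
      simp only [hind, hdvec]
      exact stmt7_gval chat l B T'
    rw [hxB]
    linarith
  -- Step 5: membership in the sup set for x
  have step5 : (∑ i, dvec B i * x i) - opt (dvec B) ≤
      sSup {v : ℝ | ∃ c : Fin n → ℝ,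
        (∀ i, (1 - l) * chat i ≤ c i ∧ c i ≤ (1 + l) * chat i) ∧
        v = (∑ i, c i * x i) - opt c} :=
    le_csSup (hbdd x hx) ⟨dvec B, hbox B, rfl⟩
  linarith
end

section
/- Consider the selection problem X = {x ∈ {0,1}^n : Σᵢ xᵢ = p} with nominal costs ĉ ≥ 0 and the compromise regret objective val(x) = ∫₀¹ reg(x,λ) dλ. A nominal solution x̂ (selecting p items of smallest ĉ) minimizes val over X. -/
namespace Stmt8Aux
open Finset

variable {n : ℕ}

/-- indicator vector of a finset -/
def ind (s : Finset (Fin n)) : Fin n → ℝ := fun i => if i ∈ s then 1 else 0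

lemma sum_mul_ind (c : Fin n → ℝ) (s : Finset (Fin n)) :
    ∑ i, c i * ind s i = ∑ i ∈ s, c i := by
  have : ∀ i, c i * ind s i = if i ∈ s then c i else 0 := by
    intro i; simp [ind, mul_ite]
  simp only [this, Finset.sum_ite_mem, Finset.univ_inter]

lemma sum_ind (s : Finset (Fin n)) : ∑ i, ind s i = (s.card : ℝ) := by
  have := sum_mul_ind (fun _ => (1 : ℝ)) s
  simpa using this

/-- worst-case cost vector for selection s at level l -/
def cb (chat : Fin n → ℝ) (l : ℝ) (s : Finset (Fin n)) : Fin n → ℝ :=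
  fun k => if k ∈ s then (1+l)*chat k else (1-l)*chat k

def W (p : ℕ) (c : Fin n → ℝ) : Set ℝ :=
  ↑((Finset.univ.powersetCard p).image fun s => ∑ i ∈ s, c i)

noncomputable def optW (p : ℕ) (c : Fin n → ℝ) : ℝ := sInf (W p c)

lemma mem_W {p : ℕ} {c : Fin n → ℝ} {v : ℝ} :
    v ∈ W p c ↔ ∃ s : Finset (Fin n), s.card = p ∧ v = ∑ i ∈ s, c i := by
  simp only [W, Finset.coe_image, Set.mem_image, Finset.mem_coe,
    Finset.mem_powersetCard_univ]
  constructor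
  · rintro ⟨s, hs, rfl⟩; exact ⟨s, hs, rfl⟩
  · rintro ⟨s, hs, rfl⟩; exact ⟨s, hs, rfl⟩

lemma optW_le {p : ℕ} {c : Fin n → ℝ} {s : Finset (Fin n)} (hs : s.card = p) :
    optW p c ≤ ∑ i ∈ s, c i :=
  csInf_le ((Finset.finite_toSet _).bddBelow) (mem_W.2 ⟨s, hs, rfl⟩)

lemma optW_nonneg {p : ℕ} {c : Fin n → ℝ}
    (hex : ∃ s : Finset (Fin n), s.card = p) (hc : ∀ i, 0 ≤ c i) :
    0 ≤ optW p c := by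
  obtain ⟨s, hs⟩ := hex
  refine le_csInf ⟨_, mem_W.2 ⟨s, hs, rfl⟩⟩ ?_
  rintro v hv
  obtain ⟨t, _, rfl⟩ := mem_W.1 hv
  exact Finset.sum_nonneg fun i _ => hc i

lemma optW_exists {p : ℕ} {c : Fin n → ℝ}
    (hex : ∃ s : Finset (Fin n), s.card = p) :
    ∃ t : Finset (Fin n), t.card = p ∧ optW p c = ∑ i ∈ t, c i := by
  obtain ⟨s, hs⟩ := hex
  have hne : (W p c).Nonempty := ⟨_, mem_W.2 ⟨s, hs, rfl⟩⟩
  have hfin : (W p c).Finite := Finset.finite_toSet _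
  have := hne.csInf_mem hfin
  obtain ⟨t, ht, hv⟩ := mem_W.1 this
  exact ⟨t, ht, hv⟩

lemma swap_opt {p : ℕ} {chat : Fin n → ℝ} (hc : ∀ i, 0 ≤ chat i)
    {l : ℝ} (hl0 : 0 ≤ l) (hl1 : l ≤ 1)
    {s : Finset (Fin n)} {i j : Fin n} (hi : i ∈ s) (hj : j ∉ s)
    (hij : chat i ≤ chat j) (hs : s.card = p) :
    optW p (cb chat l (insert j (s.erase i))) ≤
      optW p (cb chat l s) + (1+l)*(chat j - chat i) := by
  have hex : ∃ t : Finset (Fin n), t.card = p := ⟨s, hs⟩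
  obtain ⟨t, htc, hte⟩ := optW_exists (c := cb chat l s) hex
  set s' := insert j (s.erase i) with hs'
  have hij' : i ≠ j := fun h => hj (h ▸ hi)
  have his' : i ∉ s' := by simp [hs', hij']
  have hjs' : j ∈ s' := mem_insert_self _ _
  have hci : cb chat l s i = (1+l)*chat i := by simp [cb, hi]
  have hcj : cb chat l s j = (1-l)*chat j := by simp [cb, hj]
  have hci' : cb chat l s' i = (1-l)*chat i := by simp [cb, his']
  have hcj' : cb chat l s' j = (1+l)*chat j := by simp [cb, hjs']
  have hoff : ∀ k, k ≠ i → k ≠ j → cb chat l s' k = cb chat l s k := by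
    intro k hki hkj
    have : k ∈ s' ↔ k ∈ s := by
      simp [hs', mem_insert, mem_erase, hki, hkj]
    simp only [cb, this]
  have hRHS : 0 ≤ (1+l)*(chat j - chat i) := by nlinarith
  by_cases hit : i ∈ t <;> by_cases hjt : j ∈ t
  · -- both in t
    have hdiff : ∑ k ∈ t, cb chat l s' k - ∑ k ∈ t, cb chat l s k
        = 2*l*(chat j - chat i) := by
      rw [← Finset.sum_sub_distrib]
      have hsub : ({i, j} : Finset (Fin n)) ⊆ t := by
        intro k hk; simp only [mem_insert, mem_singleton] at hk
        rcases hk with rfl | rfl <;> assumption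
      rw [← Finset.sum_subset hsub (by
        intro k hk hk2
        simp only [mem_insert, mem_singleton, not_or] at hk2
        rw [hoff k hk2.1 hk2.2, sub_self])]
      rw [Finset.sum_pair hij', hci, hci', hcj, hcj']
      ring
    have h1 : optW p (cb chat l s') ≤ ∑ k ∈ t, cb chat l s' k := optW_le htc
    have h2 : 2*l*(chat j - chat i) ≤ (1+l)*(chat j - chat i) := by nlinarith
    linarith
  · -- i ∈ t, j ∉ t
    have h1 : optW p (cb chat l s') ≤ ∑ k ∈ t, cb chat l s' k := optW_le htc
    have h2 : ∑ k ∈ t, cb chat l s' k ≤ ∑ k ∈ t, cb chat l s k := by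
      apply Finset.sum_le_sum
      intro k hk
      by_cases hki : k = i
      · subst hki; rw [hci, hci']; nlinarith [hc k]
      · rw [hoff k hki (fun h => hjt (h ▸ hk))]
    linarith
  · -- i ∉ t, j ∈ t
    set t' := insert i (t.erase j) with ht'
    have hit' : i ∉ t.erase j := fun h => hit (mem_of_mem_erase h)
    have htc' : t'.card = p := by
      have hp1 : 1 ≤ t.card := card_pos.mpr ⟨j, hjt⟩
      rw [ht', card_insert_of_notMem hit', card_erase_of_mem hjt]
      omega
    have h1 : optW p (cb chat l s') ≤ ∑ k ∈ t', cb chat l s' k := optW_le htc'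
    have h2 : ∑ k ∈ t', cb chat l s' k
        = (1-l)*chat i + (∑ k ∈ t, cb chat l s k - (1-l)*chat j) := by
      rw [ht', Finset.sum_insert hit', hci']
      congr 1
      have : ∑ k ∈ t.erase j, cb chat l s' k = ∑ k ∈ t.erase j, cb chat l s k := by
        apply Finset.sum_congr rfl
        intro k hk
        exact hoff k (fun h => hit (h ▸ mem_of_mem_erase hk)) (ne_of_mem_erase hk)
      rw [this, Finset.sum_erase_eq_sub hjt, hcj]
    have h3 : (1-l)*chat i - (1-l)*chat j ≤ 0 := by nlinarith
    linarith
  · -- neither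
    have h1 : optW p (cb chat l s') ≤ ∑ k ∈ t, cb chat l s' k := optW_le htc
    have h2 : ∑ k ∈ t, cb chat l s' k = ∑ k ∈ t, cb chat l s k := by
      apply Finset.sum_congr rfl
      intro k hk
      exact hoff k (fun h => hit (h ▸ hk)) (fun h => hjt (h ▸ hk))
    linarith

lemma exchange {p : ℕ} {chat : Fin n → ℝ} (hc : ∀ i, 0 ≤ chat i)
    {l : ℝ} (hl0 : 0 ≤ l) (hl1 : l ≤ 1)
    {sx shat : Finset (Fin n)} (hsx : sx.card = p) (hshat : shat.card = p)
    (hsm : ∀ i j, i ∈ shat → j ∉ shat → chat i ≤ chat j) :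
    optW p (cb chat l sx) - (1+l) * ∑ i ∈ sx, chat i ≤
      optW p (cb chat l shat) - (1+l) * ∑ i ∈ shat, chat i := by
  suffices H : ∀ k (s : Finset (Fin n)), s.card = p → (s \ sx).card = k →
      s \ sx ⊆ shat → shat ∩ sx ⊆ s →
      optW p (cb chat l sx) - (1+l) * ∑ i ∈ sx, chat i ≤
        optW p (cb chat l s) - (1+l) * ∑ i ∈ s, chat i by
    exact H _ shat hshat rfl sdiff_subset inter_subset_left
  intro k
  induction k with
  | zero =>
    intro s hs h0 _ _
    have hsub : s ⊆ sx := sdiff_eq_empty_iff_subset.mp (card_eq_zero.mp h0)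
    have : s = sx := Finset.eq_of_subset_of_card_le hsub (by omega)
    subst this
    exact le_refl _
  | succ k ih =>
    intro s hs hk hsub hint
    have hne1 : (s \ sx).Nonempty := card_pos.mp (by omega)
    obtain ⟨i, hi⟩ := hne1
    have hcards : (sx \ s).card = (s \ sx).card := by
      have h1 := Finset.card_sdiff_add_card_inter s sx
      have h2 := Finset.card_sdiff_add_card_inter sx s
      rw [Finset.inter_comm] at h2
      omega
    have hne2 : (sx \ s).Nonempty := card_pos.mp (by omega)
    obtain ⟨j, hj⟩ := hne2
    rw [mem_sdiff] at hi hj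
    set s' := insert j (s.erase i) with hs'
    have hij : chat i ≤ chat j := by
      refine hsm i j (hsub (mem_sdiff.2 hi)) (fun hjh => hj.2 ?_)
      exact hint (mem_inter.2 ⟨hjh, hj.1⟩)
    have hcard' : s'.card = p := by
      have hij2 : j ∉ s.erase i := fun h => hj.2 (mem_of_mem_erase h)
      have h1 : 1 ≤ s.card := card_pos.mpr ⟨i, hi.1⟩
      rw [hs', card_insert_of_notMem hij2, card_erase_of_mem hi.1]
      omega
    have hdiff : s' \ sx = (s \ sx).erase i := by
      ext a
      simp only [hs', mem_sdiff, mem_erase, mem_insert]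
      constructor
      · rintro ⟨ha | ⟨hai, has⟩, hax⟩
        · exact absurd (ha ▸ hj.1) hax
        · exact ⟨hai, has, hax⟩
      · rintro ⟨hai, has, hax⟩
        exact ⟨Or.inr ⟨hai, has⟩, hax⟩
    have hk' : (s' \ sx).card = k := by
      rw [hdiff, card_erase_of_mem (mem_sdiff.2 hi)]
      omega
    have hsub' : s' \ sx ⊆ shat := by
      rw [hdiff]; exact (erase_subset _ _).trans hsub
    have hint' : shat ∩ sx ⊆ s' := by
      intro a ha
      have has : a ∈ s := hint ha
      have hai : a ≠ i := fun h => hi.2 (h ▸ (mem_inter.1 ha).2)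
      exact mem_insert_of_mem (mem_erase.2 ⟨hai, has⟩)
    have hih := ih s' hcard' hk' hsub' hint'
    have hswap := swap_opt hc hl0 hl1 hi.1 hj.2 hij hs
    have hsum : ∑ m ∈ s', chat m = ∑ m ∈ s, chat m - chat i + chat j := by
      have hij2 : j ∉ s.erase i := fun h => hj.2 (mem_of_mem_erase h)
      rw [hs', Finset.sum_insert hij2, Finset.sum_erase_eq_sub hi.1]
      ring
    have e1 : (1+l) * ∑ m ∈ s', chat m
        = (1+l) * ∑ m ∈ s, chat m - (1+l)*chat i + (1+l)*chat j := by
      rw [hsum]; ring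
    have e2 : (1+l)*(chat j - chat i) = (1+l)*chat j - (1+l)*chat i := by ring
    linarith

/-- the set of regret values over the uncertainty box -/
def RS (chat : Fin n → ℝ) (p : ℕ) (s : Finset (Fin n)) (l : ℝ) : Set ℝ :=
  {v | ∃ c : Fin n → ℝ,
    (∀ i, (1 - l) * chat i ≤ c i ∧ c i ≤ (1 + l) * chat i) ∧
    v = (∑ i ∈ s, c i) - optW p c}

lemma RS_nonempty {chat : Fin n → ℝ} (hc : ∀ i, 0 ≤ chat i) {p : ℕ}
    (s : Finset (Fin n)) {l : ℝ} (hl0 : 0 ≤ l) :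
    (RS chat p s l).Nonempty := by
  refine ⟨_, chat, fun i => ⟨?_, ?_⟩, rfl⟩ <;> nlinarith [hc i]

lemma RS_bddAbove {chat : Fin n → ℝ} (hc : ∀ i, 0 ≤ chat i) {p : ℕ}
    (hex : ∃ t : Finset (Fin n), t.card = p)
    (s : Finset (Fin n)) {l : ℝ} (hl0 : 0 ≤ l) (hl1 : l ≤ 1) :
    BddAbove (RS chat p s l) := by
  refine ⟨(1+l) * ∑ i, chat i, ?_⟩
  rintro v ⟨c, hbox, rfl⟩
  have h0 : 0 ≤ optW p c := by
    refine optW_nonneg hex fun i => le_trans ?_ (hbox i).1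
    nlinarith [hc i]
  have h1 : ∑ i ∈ s, c i ≤ ∑ i ∈ s, (1+l) * chat i :=
    Finset.sum_le_sum fun i _ => (hbox i).2
  have h2 : ∑ i ∈ s, (1+l) * chat i ≤ ∑ i, (1+l) * chat i :=
    Finset.sum_le_sum_of_subset_of_nonneg (Finset.subset_univ s)
      (fun i _ _ => by nlinarith [hc i])
  simp only [← Finset.mul_sum] at h1 h2
  show ∑ i ∈ s, c i - optW p c ≤ _
  linarith

lemma RS_mono {chat : Fin n → ℝ} (hc : ∀ i, 0 ≤ chat i) {p : ℕ}
    (s : Finset (Fin n)) {l l' : ℝ} (hll' : l ≤ l') :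
    RS chat p s l ⊆ RS chat p s l' := by
  rintro v ⟨c, hbox, rfl⟩
  refine ⟨c, fun i => ⟨?_, ?_⟩, rfl⟩
  · exact le_trans (by nlinarith [hc i]) (hbox i).1
  · exact le_trans (hbox i).2 (by nlinarith [hc i])

lemma cb_mem_box {chat : Fin n → ℝ} (hc : ∀ i, 0 ≤ chat i)
    (s : Finset (Fin n)) {l : ℝ} (hl0 : 0 ≤ l) (i : Fin n) :
    (1 - l) * chat i ≤ cb chat l s i ∧ cb chat l s i ≤ (1 + l) * chat i := by
  unfold cb
  by_cases h : i ∈ s <;> simp [h] <;> nlinarith [hc i]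

lemma sSup_RS_le {chat : Fin n → ℝ} (hc : ∀ i, 0 ≤ chat i) {p : ℕ}
    (hex : ∃ t : Finset (Fin n), t.card = p)
    (s : Finset (Fin n)) {l : ℝ} (hl0 : 0 ≤ l) (hl1 : l ≤ 1) :
    sSup (RS chat p s l) ≤ (1+l) * ∑ i ∈ s, chat i - optW p (cb chat l s) := by
  refine csSup_le (RS_nonempty hc s hl0) ?_
  rintro v ⟨c, hbox, rfl⟩
  obtain ⟨t, htc, hte⟩ := optW_exists (c := c) hex
  have h1 : optW p (cb chat l s) ≤ ∑ k ∈ t, cb chat l s k := optW_le htc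
  set g : Fin n → ℝ := fun k => max 0 (cb chat l s k - c k) with hg
  have h2 : ∑ k ∈ t, (cb chat l s k - c k) ≤ ∑ k ∈ t, g k :=
    Finset.sum_le_sum fun k _ => le_max_right _ _
  have h3 : ∑ k ∈ t, g k ≤ ∑ k, g k :=
    Finset.sum_le_sum_of_subset_of_nonneg (Finset.subset_univ t)
      (fun k _ _ => le_max_left _ _)
  have h4 : ∑ k, g k = ∑ k ∈ s, g k := by
    refine (Finset.sum_subset (Finset.subset_univ s) ?_).symm
    intro k _ hks
    have : cb chat l s k - c k ≤ 0 := by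
      have := (hbox k).1
      simp only [hg, cb, if_neg hks]
      linarith
    simp only [hg]
    exact max_eq_left this
  have h5 : ∑ k ∈ s, g k ≤ ∑ k ∈ s, ((1+l) * chat k - c k) := by
    refine Finset.sum_le_sum fun k hks => ?_
    have hub : 0 ≤ (1+l) * chat k - c k := by linarith [(hbox k).2]
    simp only [hg, cb, if_pos hks]
    exact max_le hub le_rfl
  have h6 : ∑ k ∈ s, ((1+l) * chat k - c k)
      = (1+l) * ∑ k ∈ s, chat k - ∑ k ∈ s, c k := by
    rw [Finset.sum_sub_distrib, Finset.mul_sum]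
  have h7 : ∑ k ∈ t, (cb chat l s k - c k)
      = ∑ k ∈ t, cb chat l s k - ∑ k ∈ t, c k := Finset.sum_sub_distrib _ _
  show ∑ i ∈ s, c i - optW p c ≤ _
  rw [hte]
  linarith

lemma le_sSup_RS {chat : Fin n → ℝ} (hc : ∀ i, 0 ≤ chat i) {p : ℕ}
    (hex : ∃ t : Finset (Fin n), t.card = p)
    (s : Finset (Fin n)) {l : ℝ} (hl0 : 0 ≤ l) (hl1 : l ≤ 1) :
    (1+l) * ∑ i ∈ s, chat i - optW p (cb chat l s) ≤ sSup (RS chat p s l) := by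
  refine le_csSup (RS_bddAbove hc hex s hl0 hl1) ?_
  refine ⟨cb chat l s, cb_mem_box hc s hl0, ?_⟩
  congr 1
  rw [Finset.mul_sum]
  exact (Finset.sum_congr rfl fun i hi => by simp [cb, hi]).symm

end Stmt8Aux

theorem stmt8 {n : ℕ} (p : ℕ) (chat : Fin n → ℝ) (hc : ∀ i, 0 ≤ chat i)
    (feas : (Fin n → ℝ) → Prop)
    (hfeas : ∀ x, feas x ↔ ((∀ i, x i = 0 ∨ x i = 1) ∧ ∑ i, x i = (p : ℝ)))
    (opt : (Fin n → ℝ) → ℝ)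
    (hopt : ∀ c, opt c = sInf {v : ℝ | ∃ y, feas y ∧ v = ∑ i, c i * y i})
    (reg : (Fin n → ℝ) → ℝ → ℝ)
    (hreg : ∀ x l, reg x l = sSup {v : ℝ | ∃ c : Fin n → ℝ,
        (∀ i, (1 - l) * chat i ≤ c i ∧ c i ≤ (1 + l) * chat i) ∧
        v = (∑ i, c i * x i) - opt c})
    (val : (Fin n → ℝ) → ℝ)
    (hval : ∀ x, val x = ∫ l in (0:ℝ)..1, reg x l)
    (xhat : Fin n → ℝ) (hxhatf : feas xhat)
    (hsmall : ∀ i j, xhat i = 1 → xhat j = 0 → chat i ≤ chat j) :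
    ∀ x, feas x → val xhat ≤ val x := by
  intro x hx
  -- characterize feasible points as indicators of p-subsets
  have hchar : ∀ z, feas z → ∃ s : Finset (Fin n), s.card = p ∧ z = Stmt8Aux.ind s := by
    intro z hz
    rw [hfeas] at hz
    obtain ⟨hbin, hsum⟩ := hz
    set s := Finset.univ.filter (fun i => z i = 1) with hsdef
    have hze : z = Stmt8Aux.ind s := by
      funext i
      rcases hbin i with h | h <;>
        simp [Stmt8Aux.ind, hsdef, Finset.mem_filter, h]
    have hcard : (s.card : ℝ) = (p : ℝ) := by
      rw [← hsum, hze, Stmt8Aux.sum_ind]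
    exact ⟨s, by exact_mod_cast hcard, hze⟩
  obtain ⟨shat, hshatc, hxh⟩ := hchar xhat hxhatf
  obtain ⟨sx, hsxc, hxe⟩ := hchar x hx
  subst hxh hxe
  have hex : ∃ t : Finset (Fin n), t.card = p := ⟨shat, hshatc⟩
  -- identify opt with optW
  have hopt' : ∀ c, opt c = Stmt8Aux.optW p c := by
    intro c
    rw [hopt]
    unfold Stmt8Aux.optW
    congr 1
    ext v
    simp only [Set.mem_setOf_eq, Stmt8Aux.mem_W]
    constructor
    · rintro ⟨y, hy, rfl⟩
      obtain ⟨s, hsc, rfl⟩ := hchar y hy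
      exact ⟨s, hsc, Stmt8Aux.sum_mul_ind c s⟩
    · rintro ⟨s, hsc, rfl⟩
      refine ⟨Stmt8Aux.ind s, ?_, (Stmt8Aux.sum_mul_ind c s).symm⟩
      rw [hfeas]
      refine ⟨fun i => ?_, ?_⟩
      · unfold Stmt8Aux.ind; split <;> simp
      · rw [Stmt8Aux.sum_ind, hsc]
  -- identify reg with sSup of RS
  have hregS : ∀ (s : Finset (Fin n)) (l : ℝ),
      reg (Stmt8Aux.ind s) l = sSup (Stmt8Aux.RS chat p s l) := by
    intro s l
    rw [hreg]
    congr 1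
    ext v
    simp only [Stmt8Aux.RS, Set.mem_setOf_eq]
    constructor <;> rintro ⟨c, h1, rfl⟩ <;> refine ⟨c, h1, ?_⟩ <;>
      rw [Stmt8Aux.sum_mul_ind, hopt' c]
  have hsm : ∀ i j, i ∈ shat → j ∉ shat → chat i ≤ chat j := by
    intro i j hi hj
    exact hsmall i j (by simp [Stmt8Aux.ind, hi]) (by simp [Stmt8Aux.ind, hj])
  -- pointwise comparison on [0,1]
  have hpt : ∀ l ∈ Set.Icc (0:ℝ) 1,
      reg (Stmt8Aux.ind shat) l ≤ reg (Stmt8Aux.ind sx) l := by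
    rintro l ⟨hl0, hl1⟩
    rw [hregS, hregS]
    have h1 := Stmt8Aux.sSup_RS_le hc hex shat hl0 hl1
    have h2 := Stmt8Aux.le_sSup_RS hc hex sx hl0 hl1
    have h3 := Stmt8Aux.exchange hc hl0 hl1 hsxc hshatc hsm
    linarith
  -- monotonicity in l, hence integrability
  have hmono : ∀ s : Finset (Fin n),
      MonotoneOn (reg (Stmt8Aux.ind s)) (Set.Icc (0:ℝ) 1) := by
    intro s l hl l' hl' hll'
    rw [hregS, hregS]
    exact csSup_le_csSup (Stmt8Aux.RS_bddAbove hc hex s hl'.1 hl'.2)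
      (Stmt8Aux.RS_nonempty hc s hl.1) (Stmt8Aux.RS_mono hc s hll')
  have hint : ∀ s : Finset (Fin n),
      IntervalIntegrable (reg (Stmt8Aux.ind s)) MeasureTheory.volume 0 1 := by
    intro s
    apply MonotoneOn.intervalIntegrable
    rw [Set.uIcc_of_le (by norm_num : (0:ℝ) ≤ 1)]
    exact hmono s
  rw [hval, hval]
  exact intervalIntegral.integral_mono_on (by norm_num) (hint shat) (hint sx) hpt
end

section
/- Let ĉ ≥ 0 and x ∈ {0,1}^n with exactly k ones. For λ ∈ [0,1], items i with x_i = 1 have cost (1+λ)ĉ_i (nondecreasing in λ) and items with x_i = 0 have cost (1−λ)ĉ_i (nonincreasing in λ). Then the number of values λ ∈ [0,1] at which the strict order between the costs of some pair of items changes is at most k·(n−k). -/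
theorem stmt10 {n k : ℕ} (chat : Fin n → ℝ) (hc : ∀ i, 0 ≤ chat i)
    (x : Fin n → ℝ) (hx : ∀ i, x i = 0 ∨ x i = 1)
    (hk : Set.ncard {i : Fin n | x i = 1} = k)
    (cost : Fin n → ℝ → ℝ)
    (hcost : ∀ i l, cost i l = if x i = 1 then (1 + l) * chat i else (1 - l) * chat i) :
    Set.ncard {l : ℝ | l ∈ Set.Icc (0:ℝ) 1 ∧ ∃ i j : Fin n,
      ∀ ε > (0:ℝ),
        (∃ μ ∈ Set.Icc (0:ℝ) 1, |μ - l| < ε ∧ cost i μ < cost j μ) ∧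
        (∃ ν ∈ Set.Icc (0:ℝ) 1, |ν - l| < ε ∧ cost j ν < cost i ν)}
      ≤ k * (n - k) := by
  classical
  set A : Set (Fin n) := {i : Fin n | x i = 1} with hA
  set B : Set (Fin n) := {i : Fin n | x i = 0} with hB
  set F : Fin n × Fin n → ℝ := fun p => (chat p.2 - chat p.1) / (chat p.1 + chat p.2) with hF
  have hsub : {l : ℝ | l ∈ Set.Icc (0:ℝ) 1 ∧ ∃ i j : Fin n,
      ∀ ε > (0:ℝ),
        (∃ μ ∈ Set.Icc (0:ℝ) 1, |μ - l| < ε ∧ cost i μ < cost j μ) ∧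
        (∃ ν ∈ Set.Icc (0:ℝ) 1, |ν - l| < ε ∧ cost j ν < cost i ν)} ⊆ F '' (A ×ˢ B) := by
    rintro l ⟨hl, i, j, h⟩
    have hcont : ∀ m : Fin n, Continuous (cost m) := by
      intro m
      have : cost m = fun μ => if x m = 1 then (1 + μ) * chat m else (1 - μ) * chat m :=
        funext (hcost m)
      rw [this]
      split_ifs <;> fun_prop
    have hfc : Continuous fun μ : ℝ => cost i μ - cost j μ := (hcont i).sub (hcont j)
    have hle : cost i l - cost j l ≤ 0 := by
      by_contra hpos
      push_neg at hpos
      have hev : ∀ᶠ μ in nhds l, 0 < cost i μ - cost j μ :=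
        (hfc.continuousAt (x := l)).eventually (eventually_gt_nhds hpos)
      obtain ⟨δ, hδ, hball⟩ := Metric.eventually_nhds_iff.mp hev
      obtain ⟨⟨μ, _, hμl, hμ⟩, _⟩ := h δ hδ
      have := hball (show dist μ l < δ by simpa [Real.dist_eq] using hμl)
      linarith
    have hge : 0 ≤ cost i l - cost j l := by
      by_contra hneg
      push_neg at hneg
      have hev : ∀ᶠ μ in nhds l, cost i μ - cost j μ < 0 :=
        (hfc.continuousAt (x := l)).eventually (eventually_lt_nhds hneg)
      obtain ⟨δ, hδ, hball⟩ := Metric.eventually_nhds_iff.mp hev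
      obtain ⟨_, ⟨ν, _, hνl, hν⟩⟩ := h δ hδ
      have := hball (show dist ν l < δ by simpa [Real.dist_eq] using hνl)
      linarith
    have heq : cost i l = cost j l := le_antisymm (by linarith) (by linarith)
    obtain ⟨⟨μ, hμI, _, hμ⟩, ⟨ν, hνI, _, hν⟩⟩ := h 1 one_pos
    obtain ⟨hμ0, hμ1⟩ := hμI
    obtain ⟨hν0, hν1⟩ := hνI
    have hci := hc i; have hcj := hc j
    rw [hcost i, hcost j] at heq hμ hν
    rcases hx i with hxi | hxi <;> rcases hx j with hxj | hxj
    · -- both 0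
      exfalso
      simp only [hxi, hxj, zero_ne_one, if_false] at hμ hν
      have h1 : chat i < chat j := by
        by_contra h'
        push_neg at h'
        have := mul_le_mul_of_nonneg_left h' (by linarith : (0:ℝ) ≤ 1 - μ)
        linarith
      have h2 : chat j < chat i := by
        by_contra h'
        push_neg at h'
        have := mul_le_mul_of_nonneg_left h' (by linarith : (0:ℝ) ≤ 1 - ν)
        linarith
      linarith
    · -- x i = 0, x j = 1 : pair (j,i)
      refine ⟨(j, i), ⟨hxj, hxi⟩, ?_⟩
      simp only [hxi, hxj, zero_ne_one, if_false, if_true] at heq hμ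
      have hsum : 0 < chat j + chat i := by
        rcases lt_or_eq_of_le (by linarith : (0:ℝ) ≤ chat j + chat i) with h' | h'
        · exact h'
        · exfalso
          have hi0 : chat i = 0 := by linarith
          have hj0 : chat j = 0 := by linarith
          rw [hi0, hj0] at hμ
          linarith
      simp only [hF]
      field_simp
      linarith
    · -- x i = 1, x j = 0 : pair (i,j)
      refine ⟨(i, j), ⟨hxi, hxj⟩, ?_⟩
      simp only [hxi, hxj, zero_ne_one, if_false, if_true] at heq hμ
      have hsum : 0 < chat i + chat j := by
        rcases lt_or_eq_of_le (by linarith : (0:ℝ) ≤ chat i + chat j) with h' | h'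
        · exact h'
        · exfalso
          have hi0 : chat i = 0 := by linarith
          have hj0 : chat j = 0 := by linarith
          rw [hi0, hj0] at hμ
          linarith
      simp only [hF]
      field_simp
      linarith
    · -- both 1
      exfalso
      simp only [hxi, hxj, if_true] at hμ hν
      have h1 : chat i < chat j := by
        by_contra h'
        push_neg at h'
        have := mul_le_mul_of_nonneg_left h' (by linarith : (0:ℝ) ≤ 1 + μ)
        linarith
      have h2 : chat j < chat i := by
        by_contra h'
        push_neg at h'
        have := mul_le_mul_of_nonneg_left h' (by linarith : (0:ℝ) ≤ 1 + ν)
        linarith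
      linarith
  have hprod : (A ×ˢ B).ncard = A.ncard * B.ncard := by
    rw [Set.ncard_eq_toFinset_card' (A ×ˢ B), Set.toFinset_prod, Finset.card_product,
      Set.ncard_eq_toFinset_card' A, Set.ncard_eq_toFinset_card' B]
  have hBA : B = Aᶜ := by
    ext i
    rcases hx i with h' | h' <;> simp [hA, hB, h']
  have hcompl : k + Aᶜ.ncard = n := by
    have := Set.ncard_add_ncard_compl A
    rw [hk] at this
    simpa using this
  have hBcard : B.ncard = n - k := by
    rw [hBA]; omega
  calc Set.ncard _ ≤ (F '' (A ×ˢ B)).ncard := Set.ncard_le_ncard hsub (Set.toFinite _)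
    _ ≤ (A ×ˢ B).ncard := Set.ncard_image_le (Set.toFinite _)
    _ = k * (n - k) := by rw [hprod, hk, hBcard]
end

section
/- Let X be the spanning trees of a connected graph G=(V,E), take nominal costs ĉ_e = 1 for all e, interval uncertainty U(λ) = ∏_e [1−λ, 1+λ], λ ∈ [0,1], and compromise objective val(x) = ∫₀¹ reg(x,λ) dλ where reg(x,λ) = max_{c∈U(λ)}(cᵗx − min_{y∈X} cᵗy). Then val(x) = max_{y∈X} Σ_{e : x_e = 0} y_e, i.e. val(x) equals the maximum, over spanning trees y, of the number of edges of y not in x. Consequently any minimizer of val is an optimal solution of the min-max regret spanning tree problem with all cost intervals [0,1]. -/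
open Finset MeasureTheory

/-- `T` is (the edge set of) a spanning tree of `G`. -/
def IsSpanningTree {V : Type*} [Fintype V] (G : SimpleGraph V) (T : Finset (Sym2 V)) : Prop :=
  ↑T ⊆ G.edgeSet ∧ (SimpleGraph.fromEdgeSet (↑T : Set (Sym2 V))).Connected ∧
    T.card = Fintype.card V - 1

section Key

variable {V : Type*} [Fintype V] [DecidableEq V] (G : SimpleGraph V) [DecidableRel G.Adj]

lemma st_sub {T : Finset (Sym2 V)} (h : IsSpanningTree G T) : T ⊆ G.edgeFinset :=
  fun e he => SimpleGraph.mem_edgeFinset.2 (h.1 he)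

lemma st_card_sdiff {T T' : Finset (Sym2 V)} (h : IsSpanningTree G T)
    (h' : IsSpanningTree G T') : (T \ T').card = (T' \ T).card := by
  have h1 := Finset.card_sdiff_add_card_inter T T'
  have h2 := Finset.card_sdiff_add_card_inter T' T
  rw [Finset.inter_comm] at h2
  have := h.2.2; have := h'.2.2
  omega

lemma val_set_finite (f : Finset (Sym2 V) → ℝ) :
    {w : ℝ | ∃ Ty : Finset (Sym2 V), IsSpanningTree G Ty ∧ w = f Ty}.Finite :=
  Set.Finite.subset (Set.finite_range f) (by rintro w ⟨Ty, _, rfl⟩; exact ⟨Ty, rfl⟩)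

lemma key {Tx : Finset (Sym2 V)} (hTx : IsSpanningTree G Tx) (a b : ℝ) (hab : a ≤ b) :
    sSup {v : ℝ | ∃ c : Sym2 V → ℝ,
        (∀ e ∈ G.edgeFinset, a ≤ c e ∧ c e ≤ b) ∧
        v = (∑ e ∈ Tx, c e) -
          sInf {w : ℝ | ∃ Ty : Finset (Sym2 V), IsSpanningTree G Ty ∧ w = ∑ e ∈ Ty, c e}}
    = (b - a) * sSup {m : ℝ | ∃ Ty : Finset (Sym2 V), IsSpanningTree G Ty ∧
        m = ((Ty \ Tx).card : ℝ)} := by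
  set A : Set ℝ := {m : ℝ | ∃ Ty : Finset (Sym2 V), IsSpanningTree G Ty ∧
      m = ((Ty \ Tx).card : ℝ)} with hA
  have hAfin : A.Finite := val_set_finite G _
  have hAne : A.Nonempty := ⟨_, Tx, hTx, rfl⟩
  set M := sSup A with hM
  obtain ⟨Ts, hTs, hTsM⟩ : M ∈ A := Set.Nonempty.csSup_mem hAne hAfin
  have hMub : ∀ Ty : Finset (Sym2 V), IsSpanningTree G Ty → ((Ty \ Tx).card : ℝ) ≤ M :=
    fun Ty hTy => le_csSup hAfin.bddAbove ⟨Ty, hTy, rfl⟩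
  -- general bound on sum differences
  have hdiff : ∀ (c : Sym2 V → ℝ), (∀ e ∈ G.edgeFinset, a ≤ c e ∧ c e ≤ b) →
      ∀ (T T' : Finset (Sym2 V)), IsSpanningTree G T → IsSpanningTree G T' →
      (∑ e ∈ T, c e) - (∑ e ∈ T', c e) ≤ (b - a) * ((T' \ T).card : ℝ) := by
    intro c hc T T' hT hT'
    have e1 := Finset.sum_inter_add_sum_sdiff T T' c
    have e2 := Finset.sum_inter_add_sum_sdiff T' T c
    rw [Finset.inter_comm] at e2
    have hconst : ∀ (s : Finset (Sym2 V)) (r : ℝ), (∑ _e ∈ s, r) = r * (s.card : ℝ) :=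
      fun s r => by rw [Finset.sum_const, nsmul_eq_mul, mul_comm]
    have hub : (∑ e ∈ T \ T', c e) ≤ b * ((T \ T').card : ℝ) := by
      calc (∑ e ∈ T \ T', c e) ≤ ∑ _e ∈ T \ T', b :=
            Finset.sum_le_sum (fun e he =>
              (hc e (st_sub G hT (Finset.mem_sdiff.1 he).1)).2)
        _ = b * ((T \ T').card : ℝ) := hconst _ _
    have hlb : a * ((T' \ T).card : ℝ) ≤ ∑ e ∈ T' \ T, c e := by
      calc a * ((T' \ T).card : ℝ) = ∑ _e ∈ T' \ T, a := (hconst _ _).symm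
        _ ≤ ∑ e ∈ T' \ T, c e :=
            Finset.sum_le_sum (fun e he =>
              (hc e (st_sub G hT' (Finset.mem_sdiff.1 he).1)).1)
    have hcard : ((T \ T').card : ℝ) = ((T' \ T).card : ℝ) := by
      exact_mod_cast st_card_sdiff G hT hT'
    have : (∑ e ∈ T, c e) - (∑ e ∈ T', c e)
        = (∑ e ∈ T \ T', c e) - (∑ e ∈ T' \ T, c e) := by
      rw [← e1, ← e2]; ring
    rw [this]
    calc (∑ e ∈ T \ T', c e) - (∑ e ∈ T' \ T, c e)
        ≤ b * ((T \ T').card : ℝ) - a * ((T' \ T).card : ℝ) := by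
          exact sub_le_sub hub hlb
      _ = (b - a) * ((T' \ T).card : ℝ) := by rw [hcard]; ring
  -- upper bound for all elements of the sup set
  have hub : ∀ v ∈ {v : ℝ | ∃ c : Sym2 V → ℝ,
        (∀ e ∈ G.edgeFinset, a ≤ c e ∧ c e ≤ b) ∧
        v = (∑ e ∈ Tx, c e) -
          sInf {w : ℝ | ∃ Ty : Finset (Sym2 V), IsSpanningTree G Ty ∧ w = ∑ e ∈ Ty, c e}},
      v ≤ (b - a) * M := by
    rintro v ⟨c, hc, rfl⟩
    set W : Set ℝ := {w : ℝ | ∃ Ty : Finset (Sym2 V), IsSpanningTree G Ty ∧ w = ∑ e ∈ Ty, c e}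
    have hWfin : W.Finite := val_set_finite G _
    have hWne : W.Nonempty := ⟨_, Tx, hTx, rfl⟩
    obtain ⟨Ty0, hTy0, hIy0⟩ : sInf W ∈ W := Set.Nonempty.csInf_mem hWne hWfin
    rw [hIy0]
    calc (∑ e ∈ Tx, c e) - (∑ e ∈ Ty0, c e) ≤ (b - a) * ((Ty0 \ Tx).card : ℝ) :=
          hdiff c hc Tx Ty0 hTx hTy0
      _ ≤ (b - a) * M :=
          mul_le_mul_of_nonneg_left (hMub Ty0 hTy0) (by linarith)
  -- witness
  have hwit : (b - a) * M ∈ {v : ℝ | ∃ c : Sym2 V → ℝ,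
        (∀ e ∈ G.edgeFinset, a ≤ c e ∧ c e ≤ b) ∧
        v = (∑ e ∈ Tx, c e) -
          sInf {w : ℝ | ∃ Ty : Finset (Sym2 V), IsSpanningTree G Ty ∧ w = ∑ e ∈ Ty, c e}} := by
    refine ⟨fun e => if e ∈ Tx then b else a, fun e _ => ?_, ?_⟩
    · by_cases h : e ∈ Tx <;> simp [h, hab]
    · set c : Sym2 V → ℝ := fun e => if e ∈ Tx then b else a with hcdef
      have hsum : ∀ Ty : Finset (Sym2 V), IsSpanningTree G Ty →
          (∑ e ∈ Ty, c e) = b * (Tx.card : ℝ) - (b - a) * ((Ty \ Tx).card : ℝ) := by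
        intro Ty hTy
        have hconst : ∀ (s : Finset (Sym2 V)) (r : ℝ), (∑ _e ∈ s, r) = r * (s.card : ℝ) :=
          fun s r => by rw [Finset.sum_const, nsmul_eq_mul, mul_comm]
        have e2 := Finset.sum_inter_add_sum_sdiff Ty Tx c
        have h1 : (∑ e ∈ Ty ∩ Tx, c e) = b * ((Ty ∩ Tx).card : ℝ) := by
          rw [show (∑ e ∈ Ty ∩ Tx, c e) = ∑ _e ∈ Ty ∩ Tx, b from
            Finset.sum_congr rfl (fun e he => by
              simp [hcdef, (Finset.mem_inter.1 he).2])]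
          exact hconst _ _
        have h2 : (∑ e ∈ Ty \ Tx, c e) = a * ((Ty \ Tx).card : ℝ) := by
          rw [show (∑ e ∈ Ty \ Tx, c e) = ∑ _e ∈ Ty \ Tx, a from
            Finset.sum_congr rfl (fun e he => by
              simp [hcdef, (Finset.mem_sdiff.1 he).2])]
          exact hconst _ _
        have hcards : ((Ty ∩ Tx).card : ℝ) + ((Ty \ Tx).card : ℝ) = (Ty.card : ℝ) := by
          exact_mod_cast Finset.card_inter_add_card_sdiff Ty Tx
        have hTc : (Ty.card : ℝ) = (Tx.card : ℝ) := by
          have := hTy.2.2; have := hTx.2.2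
          exact_mod_cast by omega
        have hi : ((Ty ∩ Tx).card : ℝ) = (Tx.card : ℝ) - ((Ty \ Tx).card : ℝ) := by
          linarith
        rw [← e2, h1, h2, hi]; ring
      have hsumTx : (∑ e ∈ Tx, c e) = b * (Tx.card : ℝ) := by
        rw [show (∑ e ∈ Tx, c e) = ∑ _e ∈ Tx, b from
          Finset.sum_congr rfl (fun e he => by simp [hcdef, he])]
        rw [Finset.sum_const, nsmul_eq_mul, mul_comm]
      set W : Set ℝ := {w : ℝ | ∃ Ty : Finset (Sym2 V), IsSpanningTree G Ty ∧ w = ∑ e ∈ Ty, c e}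
      have hWfin : W.Finite := val_set_finite G _
      have hWne : W.Nonempty := ⟨_, Tx, hTx, rfl⟩
      have hInf : sInf W = b * (Tx.card : ℝ) - (b - a) * M := by
        apply le_antisymm
        · have : (∑ e ∈ Ts, c e) ∈ W := ⟨Ts, hTs, rfl⟩
          calc sInf W ≤ ∑ e ∈ Ts, c e := csInf_le hWfin.bddBelow this
            _ = b * (Tx.card : ℝ) - (b - a) * M := by rw [hsum Ts hTs, ← hTsM]
        · apply le_csInf hWne
          rintro w ⟨Ty, hTy, rfl⟩
          rw [hsum Ty hTy]
          have := mul_le_mul_of_nonneg_left (hMub Ty hTy) (sub_nonneg.2 hab)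
          linarith
      rw [hInf, hsumTx]; ring
  exact le_antisymm (csSup_le ⟨_, hwit⟩ hub) (le_csSup ⟨_, hub⟩ hwit)

end Key

theorem stmt12 {V : Type*} [Fintype V] [DecidableEq V]
    (G : SimpleGraph V) [DecidableRel G.Adj] (hG : G.Connected)
    (reg : Finset (Sym2 V) → ℝ → ℝ)
    (hreg : ∀ T l, reg T l = sSup {v : ℝ | ∃ c : Sym2 V → ℝ,
        (∀ e ∈ G.edgeFinset, 1 - l ≤ c e ∧ c e ≤ 1 + l) ∧
        v = (∑ e ∈ T, c e) -
          sInf {w : ℝ | ∃ Ty : Finset (Sym2 V), IsSpanningTree G Ty ∧ w = ∑ e ∈ Ty, c e}})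
    (val : Finset (Sym2 V) → ℝ)
    (hval : ∀ T, val T = ∫ l in (0:ℝ)..1, reg T l)
    (reg01 : Finset (Sym2 V) → ℝ)
    (hreg01 : ∀ T, reg01 T = sSup {v : ℝ | ∃ c : Sym2 V → ℝ,
        (∀ e ∈ G.edgeFinset, 0 ≤ c e ∧ c e ≤ 1) ∧
        v = (∑ e ∈ T, c e) -
          sInf {w : ℝ | ∃ Ty : Finset (Sym2 V), IsSpanningTree G Ty ∧ w = ∑ e ∈ Ty, c e}})
    (Tx : Finset (Sym2 V)) (hTx : IsSpanningTree G Tx) :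
    val Tx = sSup {m : ℝ | ∃ Ty : Finset (Sym2 V), IsSpanningTree G Ty ∧
        m = ((Ty \ Tx).card : ℝ)} ∧
    ((∀ T, IsSpanningTree G T → val Tx ≤ val T) →
     (∀ T, IsSpanningTree G T → reg01 Tx ≤ reg01 T)) := by
  have hval_eq : ∀ T : Finset (Sym2 V), IsSpanningTree G T →
      val T = sSup {m : ℝ | ∃ Ty : Finset (Sym2 V), IsSpanningTree G Ty ∧
        m = ((Ty \ T).card : ℝ)} := by
    intro T hT
    set M := sSup {m : ℝ | ∃ Ty : Finset (Sym2 V), IsSpanningTree G Ty ∧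
        m = ((Ty \ T).card : ℝ)} with hMdef
    have hcong : Set.EqOn (reg T) (fun l => 2 * M * l) (Set.uIcc (0:ℝ) 1) := by
      intro l hl
      rw [Set.uIcc_of_le (by norm_num : (0:ℝ) ≤ 1)] at hl
      have h0 : (0:ℝ) ≤ l := hl.1
      have := key G hT (1 - l) (1 + l) (by linarith)
      rw [hreg T l, this]
      ring
    rw [hval T, intervalIntegral.integral_congr hcong]
    rw [intervalIntegral.integral_const_mul, integral_id]
    ring
  have hreg01_eq : ∀ T : Finset (Sym2 V), IsSpanningTree G T →
      reg01 T = sSup {m : ℝ | ∃ Ty : Finset (Sym2 V), IsSpanningTree G Ty ∧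
        m = ((Ty \ T).card : ℝ)} := by
    intro T hT
    have := key G hT 0 1 (by norm_num)
    rw [hreg01 T, this]
    ring
  refine ⟨hval_eq Tx hTx, fun h T hT => ?_⟩
  rw [hreg01_eq Tx hTx, hreg01_eq T hT, ← hval_eq Tx hTx, ← hval_eq T hT]
  exact h T hT
end

section
/- Fix x ∈ {0,1}^E, ĉ ≥ 0, and the min-max regret shortest path setting with U(λ) = ∏_e [(1−λ)ĉ_e,(1+λ)ĉ_e]. Then for each λ ∈ [0,1], reg(x,λ) = (1+λ)Σ_{e: x_e=1} ĉ_e − min_{y∈X} [ λ·Σ_{e: x_e=1} 2ĉ_e y_e + (1−λ)·Σ_{e∈E} ĉ_e y_e ]·(−1)·(−1), i.e. the inner minimization is a weighted-sum scalarization, with weights (λ, 1−λ), of the bicriteria problem min_{y∈X} ( Σ_{e: x_e=1} 2ĉ_e y_e , Σ_{e∈E} ĉ_e y_e ). Hence every y attaining reg(x,λ) for some λ ∈ (0,1) is an extreme (supported) efficient solution of this bicriteria problem. -/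
open Finset

theorem stmt15 {E : Type*} [Fintype E]
    (chat : E → ℝ) (hc : ∀ e, 0 ≤ chat e)
    (X : Finset (E → ℝ)) (hX : X.Nonempty)
    (hXbin : ∀ y ∈ X, ∀ e, y e = 0 ∨ y e = 1)
    (x : E → ℝ) (hx : ∀ e, x e = 0 ∨ x e = 1)
    (reg : ℝ → ℝ)
    (hreg : ∀ l, reg l = sSup {v : ℝ | ∃ c : E → ℝ,
        (∀ e, (1 - l) * chat e ≤ c e ∧ c e ≤ (1 + l) * chat e) ∧
        v = (∑ e, c e * x e) - X.inf' hX (fun y => ∑ e, c e * y e)})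
    (f1 f2 : (E → ℝ) → ℝ)
    (hf1 : ∀ y, f1 y = ∑ e, 2 * chat e * x e * y e)
    (hf2 : ∀ y, f2 y = ∑ e, chat e * y e) :
    (∀ l ∈ Set.Icc (0:ℝ) 1,
      reg l = (1 + l) * (∑ e, chat e * x e) -
              X.inf' hX (fun y => l * f1 y + (1 - l) * f2 y)) ∧
    (∀ l ∈ Set.Ioo (0:ℝ) 1, ∀ y ∈ X,
      l * f1 y + (1 - l) * f2 y = X.inf' hX (fun z => l * f1 z + (1 - l) * f2 z) →
      ∃ w1 w2 : ℝ, 0 < w1 ∧ 0 < w2 ∧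
        ∀ z ∈ X, w1 * f1 y + w2 * f2 y ≤ w1 * f1 z + w2 * f2 z) := by
  constructor
  · intro l hl
    obtain ⟨hl0, hl1⟩ := hl
    -- the extreme scenario
    set cs : E → ℝ := fun e => (1 - l) * chat e + 2 * l * chat e * x e with hcs
    -- cs is in the box
    have hbox : ∀ e, (1 - l) * chat e ≤ cs e ∧ cs e ≤ (1 + l) * chat e := by
      intro e
      rcases hx e with h | h <;>
        constructor <;> simp [hcs, h] <;> nlinarith [hc e]
    -- key identity (A)
    have hA : (∑ e, cs e * x e) = (1 + l) * (∑ e, chat e * x e) := by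
      rw [Finset.mul_sum]
      apply Finset.sum_congr rfl
      intro e _
      rcases hx e with h | h <;> simp [hcs, h] <;> ring
    -- key identity (B)
    have hB : ∀ y ∈ X, (∑ e, cs e * y e) = l * f1 y + (1 - l) * f2 y := by
      intro y _
      rw [hf1, hf2, Finset.mul_sum, Finset.mul_sum, ← Finset.sum_add_distrib]
      apply Finset.sum_congr rfl
      intro e _
      simp [hcs]; ring
    have hinfeq : X.inf' hX (fun y => ∑ e, cs e * y e)
        = X.inf' hX (fun y => l * f1 y + (1 - l) * f2 y) := by
      apply Finset.inf'_congr hX rfl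
      intro y hy; exact hB y hy
    obtain ⟨y₀, hy₀X, hy₀⟩ := Finset.exists_mem_eq_inf' hX (fun y => ∑ e, cs e * y e)
    set v : ℝ := (1 + l) * (∑ e, chat e * x e) -
        X.inf' hX (fun y => l * f1 y + (1 - l) * f2 y) with hv
    have hmem : v ∈ {v : ℝ | ∃ c : E → ℝ,
        (∀ e, (1 - l) * chat e ≤ c e ∧ c e ≤ (1 + l) * chat e) ∧
        v = (∑ e, c e * x e) - X.inf' hX (fun y => ∑ e, c e * y e)} := by
      exact ⟨cs, hbox, by rw [hv, hA, hinfeq]⟩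
    have hub : ∀ w ∈ {v : ℝ | ∃ c : E → ℝ,
        (∀ e, (1 - l) * chat e ≤ c e ∧ c e ≤ (1 + l) * chat e) ∧
        v = (∑ e, c e * x e) - X.inf' hX (fun y => ∑ e, c e * y e)}, w ≤ v := by
      rintro w ⟨c, hcbox, rfl⟩
      obtain ⟨y₁, hy₁X, hy₁⟩ := Finset.exists_mem_eq_inf' hX (fun y => ∑ e, c e * y e)
      have h2 : (∑ e, c e * x e) - (∑ e, c e * y₁ e)
          ≤ (∑ e, cs e * x e) - (∑ e, cs e * y₁ e) := by
        rw [← Finset.sum_sub_distrib, ← Finset.sum_sub_distrib]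
        apply Finset.sum_le_sum
        intro e _
        obtain ⟨hlo, hhi⟩ := hcbox e
        rcases hx e with h | h <;> rcases hXbin y₁ hy₁X e with h' | h' <;>
          simp [hcs, h, h'] <;> nlinarith [hc e]
      have h3 : X.inf' hX (fun y => ∑ e, cs e * y e) ≤ ∑ e, cs e * y₁ e :=
        Finset.inf'_le _ hy₁X
      rw [hv, ← hA, ← hinfeq, hy₁]
      linarith
    rw [hreg l]
    exact le_antisymm (csSup_le ⟨v, hmem⟩ hub) (le_csSup ⟨v, hub⟩ hmem)
  · rintro l ⟨hl0, hl1⟩ y hyX hymin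
    refine ⟨l, 1 - l, hl0, by linarith, ?_⟩
    intro z hzX
    rw [hymin]
    exact Finset.inf'_le _ hzX
end

section
/- Let G=(V,E) be a connected graph with nominal edge costs ĉ ≥ 0, fix a spanning tree x, and define scenario costs c_e(x,λ) = (1+λ)ĉ_e for e ∈ x and (1−λ)ĉ_e for e ∉ x, λ ∈ [0,1]. The number of values of λ in [0,1] at which the strict order of the edge costs c_e(x,λ) changes (i.e. at which two edge-cost functions of opposite monotonicity cross) is at most (|V|−1)(|E|−|V|+1). Consequently, there are at most (|V|−1)(|E|−|V|+1)+1 maximal subintervals of [0,1] on which a fixed sorting of the edges by cost (with fixed tie-breaking) is valid. -/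
open Finset

theorem stmt18 {V : Type*} [Fintype V] [DecidableEq V]
    (G : SimpleGraph V) [DecidableRel G.Adj] (hG : G.Connected)
    (chat : Sym2 V → ℝ) (hc : ∀ e, 0 ≤ chat e)
    (Tx : Finset (Sym2 V)) (hTx : IsSpanningTree G Tx)
    (cost : Sym2 V → ℝ → ℝ)
    (hcost : ∀ e l, cost e l = if e ∈ Tx then (1 + l) * chat e else (1 - l) * chat e)
    (S : Set ℝ)
    (hS : S = {l : ℝ | l ∈ Set.Icc (0:ℝ) 1 ∧ ∃ e ∈ Tx, ∃ f ∈ G.edgeFinset \ Tx,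
        ∀ ε > (0:ℝ),
          (∃ μ ∈ Set.Icc (0:ℝ) 1, |μ - l| < ε ∧ cost e μ < cost f μ) ∧
          (∃ ν ∈ Set.Icc (0:ℝ) 1, |ν - l| < ε ∧ cost f ν < cost e ν)}) :
    Set.ncard S ≤ (Fintype.card V - 1) * (G.edgeFinset.card - Fintype.card V + 1) ∧
    ∀ a b : ℝ, Set.Ioo a b ⊆ Set.Icc 0 1 \ S →
      ∀ μ ∈ Set.Ioo a b, ∀ ν ∈ Set.Ioo a b, ∀ e ∈ G.edgeFinset, ∀ f ∈ G.edgeFinset,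
        (cost e μ < cost f μ ↔ cost e ν < cost f ν) := by
  obtain ⟨hT1, hT2, hT3⟩ := hTx
  have hTsub : Tx ⊆ G.edgeFinset := by
    intro x hx
    rw [SimpleGraph.mem_edgeFinset]
    exact hT1 hx
  constructor
  · -- counting part
    have hsub : S ⊆ ↑((Tx ×ˢ (G.edgeFinset \ Tx)).image
        fun p => (chat p.2 - chat p.1) / (chat p.1 + chat p.2)) := by
      intro l hl
      rw [hS] at hl
      obtain ⟨hl01, e, he, f, hf, hP⟩ := hl
      have hfT : f ∉ Tx := (Finset.mem_sdiff.mp hf).2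
      have hce : ∀ x : ℝ, cost e x = (1 + x) * chat e := by
        intro x; rw [hcost]; simp [he]
      have hcf : ∀ x : ℝ, cost f x = (1 - x) * chat f := by
        intro x; rw [hcost]; simp [hfT]
      have hABpos : 0 < chat e + chat f := by
        by_contra hcon
        push_neg at hcon
        have hA : chat e = 0 := by linarith [hc e, hc f]
        have hB : chat f = 0 := by linarith [hc e, hc f]
        obtain ⟨⟨μ, _, _, hμ2⟩, -⟩ := hP 1 one_pos
        rw [hce, hcf, hA, hB] at hμ2
        simp at hμ2
      have hne0 : chat e + chat f ≠ 0 := ne_of_gt hABpos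
      set r := (chat f - chat e) / (chat e + chat f) with hr
      have hd : ∀ x : ℝ, cost e x - cost f x = (chat e + chat f) * (x - r) := by
        intro x; rw [hce, hcf, hr]; field_simp; ring
      have hlr : l = r := by
        by_contra hne
        obtain ⟨⟨μ, hμI, hμ1, hμ2⟩, ⟨ν, hνI, hν1, hν2⟩⟩ :=
          hP |l - r| (abs_pos.mpr (sub_ne_zero.mpr hne))
        have h1 : μ < r := by
          by_contra hcon
          push_neg at hcon
          have h0 : 0 ≤ (chat e + chat f) * (μ - r) :=
            mul_nonneg hABpos.le (by linarith)
          rw [← hd] at h0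
          linarith
        have h2 : r < ν := by
          by_contra hcon
          push_neg at hcon
          have h0 : (chat e + chat f) * (ν - r) ≤ 0 :=
            mul_nonpos_of_nonneg_of_nonpos hABpos.le (by linarith)
          rw [← hd] at h0
          linarith
        rcases le_or_gt l r with hle | hlt
        · have habs : |l - r| = r - l := by
            rw [abs_of_nonpos (by linarith)]; ring
          rw [habs] at hν1
          have := (abs_lt.mp hν1).2
          linarith
        · have habs : |l - r| = l - r := abs_of_pos (by linarith)
          rw [habs] at hμ1
          have := (abs_lt.mp hμ1).1
          linarith
      rw [hlr]
      exact Finset.mem_coe.mpr (Finset.mem_image.mpr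
        ⟨(e, f), Finset.mem_product.mpr ⟨he, hf⟩, rfl⟩)
    calc S.ncard ≤ ((Tx ×ˢ (G.edgeFinset \ Tx)).image
          fun p => (chat p.2 - chat p.1) / (chat p.1 + chat p.2)).card := by
            rw [← Set.ncard_coe_finset]
            exact Set.ncard_le_ncard hsub (Finset.finite_toSet _)
      _ ≤ (Tx ×ˢ (G.edgeFinset \ Tx)).card := Finset.card_image_le
      _ = Tx.card * (G.edgeFinset \ Tx).card := Finset.card_product _ _
      _ ≤ (Fintype.card V - 1) * (G.edgeFinset.card - Fintype.card V + 1) := by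
            rw [Finset.card_sdiff_of_subset hTsub, hT3]
            exact Nat.mul_le_mul_left _ (by omega)
  · intro a b hab μ hμ ν hν e he f hf
    have hIcc : ∀ x ∈ Set.Ioo a b, x ∈ Set.Icc (0:ℝ) 1 := fun x hx => (hab hx).1
    have hnS : ∀ x ∈ Set.Ioo a b, x ∉ S := fun x hx => (hab hx).2
    have hlt1 : ∀ x ∈ Set.Ioo a b, x < 1 := by
      intro x hx
      have hmem : (x + b) / 2 ∈ Set.Ioo a b :=
        ⟨by linarith [hx.1, hx.2], by linarith [hx.2]⟩
      have h2 := (hIcc _ hmem).2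
      linarith [hx.2]
    have memS : ∀ r : ℝ, a < r → r < b → ∀ e' ∈ Tx, ∀ f' ∈ G.edgeFinset \ Tx,
        (∀ x : ℝ, a < x → x < r → cost e' x < cost f' x) →
        (∀ x : ℝ, r < x → x < b → cost f' x < cost e' x) → False := by
      intro r hra hrb e' he' f' hf' hneg hpos
      refine hnS r ⟨hra, hrb⟩ ?_
      rw [hS]
      refine ⟨hIcc r ⟨hra, hrb⟩, e', he', f', hf', fun ε hε => ?_⟩
      constructor
      · set m := max ((a + r) / 2) (r - ε / 2) with hm
        have h1 : (a + r) / 2 ≤ m := le_max_left _ _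
        have h2 : r - ε / 2 ≤ m := le_max_right _ _
        have h3 : m < r := max_lt (by linarith) (by linarith)
        exact ⟨m, hIcc _ ⟨by linarith, by linarith⟩,
          abs_lt.mpr ⟨by linarith, by linarith⟩, hneg _ (by linarith) h3⟩
      · set m := min ((r + b) / 2) (r + ε / 2) with hm
        have h1 : m ≤ (r + b) / 2 := min_le_left _ _
        have h2 : m ≤ r + ε / 2 := min_le_right _ _
        have h3 : r < m := lt_min (by linarith) (by linarith)
        exact ⟨m, hIcc _ ⟨by linarith, by linarith⟩,
          abs_lt.mpr ⟨by linarith, by linarith⟩, hpos _ h3 (by linarith)⟩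
    have H : ∀ p q : ℝ, p ∈ Set.Ioo a b → q ∈ Set.Ioo a b →
        cost e p < cost f p → cost e q < cost f q := by
      intro p q hp hq hpq
      by_contra hcon
      push_neg at hcon
      have hp0 := (hIcc p hp).1
      have hq0 := (hIcc q hq).1
      have hp1 := hlt1 p hp
      have hq1 := hlt1 q hq
      by_cases heT : e ∈ Tx <;> by_cases hfT : f ∈ Tx
      · -- both in Tx
        have hce : ∀ x : ℝ, cost e x = (1 + x) * chat e := by
          intro x; rw [hcost]; simp [heT]
        have hcf : ∀ x : ℝ, cost f x = (1 + x) * chat f := by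
          intro x; rw [hcost]; simp [hfT]
        rw [hce, hcf] at hpq hcon
        have hAB : chat e < chat f := by
          by_contra hBA
          push_neg at hBA
          have := mul_le_mul_of_nonneg_left hBA (by linarith : (0:ℝ) ≤ 1 + p)
          linarith
        have := mul_lt_mul_of_pos_left hAB (by linarith : (0:ℝ) < 1 + q)
        linarith
      · -- e ∈ Tx, f ∉ Tx
        have hce : ∀ x : ℝ, cost e x = (1 + x) * chat e := by
          intro x; rw [hcost]; simp [heT]
        have hcf : ∀ x : ℝ, cost f x = (1 - x) * chat f := by
          intro x; rw [hcost]; simp [hfT]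
        rw [hce, hcf] at hpq hcon
        have hABpos : 0 < chat e + chat f := by
          by_contra hc0
          push_neg at hc0
          have hA : chat e = 0 := by linarith [hc e, hc f]
          have hB : chat f = 0 := by linarith [hc e, hc f]
          rw [hA, hB] at hpq
          simp at hpq
        have hne0 : chat e + chat f ≠ 0 := ne_of_gt hABpos
        set r := (chat f - chat e) / (chat e + chat f) with hr
        have hd : ∀ x : ℝ, (1 + x) * chat e - (1 - x) * chat f
            = (chat e + chat f) * (x - r) := by
          intro x; rw [hr]; field_simp; ring
        have hpr : p < r := by
          by_contra hc1
          push_neg at hc1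
          have h0 : 0 ≤ (chat e + chat f) * (p - r) :=
            mul_nonneg hABpos.le (by linarith)
          rw [← hd] at h0
          linarith
        have hrq : r ≤ q := by
          by_contra hc1
          push_neg at hc1
          have h0 : (chat e + chat f) * (q - r) < 0 :=
            mul_neg_of_pos_of_neg hABpos (by linarith)
          rw [← hd] at h0
          linarith
        exact memS r (by linarith [hp.1]) (by linarith [hq.2]) e heT f
          (Finset.mem_sdiff.mpr ⟨hf, hfT⟩)
          (fun x hx1 hx2 => by
            have h0 : (chat e + chat f) * (x - r) < 0 :=
              mul_neg_of_pos_of_neg hABpos (by linarith)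
            rw [← hd] at h0
            rw [hce, hcf]
            linarith)
          (fun x hx1 hx2 => by
            have h0 : 0 < (chat e + chat f) * (x - r) :=
              mul_pos hABpos (by linarith)
            rw [← hd] at h0
            rw [hce, hcf]
            linarith)
      · -- e ∉ Tx, f ∈ Tx
        have hce : ∀ x : ℝ, cost e x = (1 - x) * chat e := by
          intro x; rw [hcost]; simp [heT]
        have hcf : ∀ x : ℝ, cost f x = (1 + x) * chat f := by
          intro x; rw [hcost]; simp [hfT]
        rw [hce, hcf] at hpq hcon
        have hABpos : 0 < chat e + chat f := by
          by_contra hc0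
          push_neg at hc0
          have hA : chat e = 0 := by linarith [hc e, hc f]
          have hB : chat f = 0 := by linarith [hc e, hc f]
          rw [hA, hB] at hpq
          simp at hpq
        have hne0 : chat e + chat f ≠ 0 := ne_of_gt hABpos
        set r := (chat e - chat f) / (chat e + chat f) with hr
        have hd : ∀ x : ℝ, (1 - x) * chat e - (1 + x) * chat f
            = (chat e + chat f) * (r - x) := by
          intro x; rw [hr]; field_simp; ring
        have hrp : r < p := by
          by_contra hc1
          push_neg at hc1
          have h0 : 0 ≤ (chat e + chat f) * (r - p) :=
            mul_nonneg hABpos.le (by linarith)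
          rw [← hd] at h0
          linarith
        have hqr : q ≤ r := by
          by_contra hc1
          push_neg at hc1
          have h0 : (chat e + chat f) * (r - q) < 0 :=
            mul_neg_of_pos_of_neg hABpos (by linarith)
          rw [← hd] at h0
          linarith
        exact memS r (by linarith [hq.1]) (by linarith [hp.2]) f hfT e
          (Finset.mem_sdiff.mpr ⟨he, heT⟩)
          (fun x hx1 hx2 => by
            have h0 : 0 < (chat e + chat f) * (r - x) :=
              mul_pos hABpos (by linarith)
            rw [← hd] at h0
            rw [hce, hcf]
            linarith)
          (fun x hx1 hx2 => by
            have h0 : (chat e + chat f) * (r - x) < 0 :=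
              mul_neg_of_pos_of_neg hABpos (by linarith)
            rw [← hd] at h0
            rw [hce, hcf]
            linarith)
      · -- both out of Tx
        have hce : ∀ x : ℝ, cost e x = (1 - x) * chat e := by
          intro x; rw [hcost]; simp [heT]
        have hcf : ∀ x : ℝ, cost f x = (1 - x) * chat f := by
          intro x; rw [hcost]; simp [hfT]
        rw [hce, hcf] at hpq hcon
        have hAB : chat e < chat f := by
          by_contra hBA
          push_neg at hBA
          have := mul_le_mul_of_nonneg_left hBA (by linarith : (0:ℝ) ≤ 1 - p)
          linarith
        have := mul_lt_mul_of_pos_left hAB (by linarith : (0:ℝ) < 1 - q)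
        linarith
    exact ⟨fun h => H μ ν hμ hν h, fun h => H ν μ hν hμ h⟩
end
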